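/- Monotonicity of the greedy allocation in a bidder's own average price: fix the requests and average prices of all other bidders and the capacity vector (k_1,…,k_m). In the greedy allocation that processes bidders in descending order of average price and grants a request iff it fits in the remaining capacity for every type, if bidder j wins with average price b̄_j, then j also wins with any average price b̄'_j > b̄_j (which can only move j earlier in the order), because moving j earlier only weakly increases the remaining capacity available when j is processed. -/
import Mathlib


/-- One greedy step: grant the demand iff it fits in the remaining capacity. -/
def greedyStep (m : ℕ) (r d : Fin m → ℕ) : Fin m → ℕ :=
  if ∀ i, d i ≤ r i then r - d else r

lemma greedyStep_le (m : ℕ) (r d : Fin m → ℕ) (i : Fin m) :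
    greedyStep m r d i ≤ r i := by
  unfold greedyStep
  split
  · exact Nat.sub_le _ _
  · exact le_rfl

lemma foldl_greedy_le (m : ℕ) (l : List (Fin m → ℕ)) :
    ∀ r i, (l.foldl (greedyStep m) r) i ≤ r i := by
  induction l with
  | nil => intro r i; exact le_rfl
  | cons a t ih =>
    intro r i
    exact (ih (greedyStep m r a) i).trans (greedyStep_le m r a i)

/-- Monotonicity of greedy allocation in a bidder's own sort key: bidder j's win
at insertion position p depends only on the remaining capacity after processing
the prefix of the other bidders before it; moving j to an earlier position
p' ≤ p (a higher average price) only weakly increases the remaining capacity, so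
if j's demand fits at position p it also fits at position p'. -/
theorem greedy_monotone (m : ℕ) (cap : Fin m → ℕ) (L : List (Fin m → ℕ))
    (d : Fin m → ℕ) (p p' : ℕ) (hpp : p' ≤ p)
    (hwin : ∀ i, d i ≤ ((L.take p).foldl (greedyStep m) cap) i) :
    ∀ i, d i ≤ ((L.take p').foldl (greedyStep m) cap) i := by
  intro i
  have h1 : L.take p' = (L.take p).take p' := by
    rw [List.take_take, Nat.min_eq_left hpp]
  have h2 : L.take p = (L.take p).take p' ++ (L.take p).drop p' :=
    (List.take_append_drop _ _).symm
  calc d i ≤ ((L.take p).foldl (greedyStep m) cap) i := hwin i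
    _ ≤ (((L.take p).take p').foldl (greedyStep m) cap) i := by
        conv_lhs => rw [h2]
        rw [List.foldl_append]
        exact foldl_greedy_le m _ _ i
    _ = ((L.take p').foldl (greedyStep m) cap) i := by rw [h1]
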